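/- Let X be a perfectly paracompact space and Y a regular space. Suppose f : X → Y is a Σ⁰₂-measurable mapping, X′ is a subset of X, and A ⊆ Y is an open set such that X′ ⊆ A^f. Then the following are equivalent: (i) X′ ∉ I_f; (ii) there exist a point x ∈ cl(X′) ∩ A^f and an open set U ⊆ Y strongly disjoint from A such that f(x) ∈ U and the pair (x, X′) is f-irreducible outside U. -/

import Mathlib

open Set Topology

/-- A set is Fσ if it is a countable union of closed sets. -/
def IsFsigma {X : Type*} [TopologicalSpace X] (s : Set X) : Prop :=
  ∃ C : ℕ → Set X, (∀ n, IsClosed (C n)) ∧ s = ⋃ n, C n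

/-- A map is piecewise continuous if its domain is covered by countably many
closed sets on each of which the map is continuous. -/
def PiecewiseContinuous {X Y : Type*} [TopologicalSpace X] [TopologicalSpace Y]
    (f : X → Y) : Prop :=
  ∃ C : ℕ → Set X, (∀ n, IsClosed (C n)) ∧ (⋃ n, C n) = Set.univ ∧
    ∀ n, ContinuousOn f (C n)

/-- A map is Δ⁰₂-measurable if preimages of open sets are both Fσ and Gδ. -/
def Delta02Measurable {X Y : Type*} [TopologicalSpace X] [TopologicalSpace Y]
    (f : X → Y) : Prop :=
  ∀ U : Set Y, IsOpen U → IsFsigma (f ⁻¹' U) ∧ IsGδ (f ⁻¹' U)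

/-- A map is Σ⁰₂-measurable if preimages of open sets are Fσ. -/
def Sigma02Measurable {X Y : Type*} [TopologicalSpace X] [TopologicalSpace Y]
    (f : X → Y) : Prop :=
  ∀ U : Set Y, IsOpen U → IsFsigma (f ⁻¹' U)

/-- X ⊆ Z is Souslin-F in Z: the result of the A-operation applied to a system
of closed subsets of Z, where `(List.range n).map α` encodes α|n. -/
def SouslinF {Z : Type*} [TopologicalSpace Z] (X : Set Z) : Prop :=
  ∃ F : List ℕ → Set Z, (∀ s, IsClosed (F s)) ∧
    X = ⋃ α : ℕ → ℕ, ⋂ n : ℕ, F ((List.range n).map α)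

/-- A space is completely Baire if every closed subspace is a Baire space. -/
def CompletelyBaire (Z : Type*) [TopologicalSpace Z] : Prop :=
  ∀ s : Set Z, IsClosed s → BaireSpace s

/-- Membership in the σ-ideal I_f: A is contained in an Fσ set F such that
the restriction f|F is piecewise continuous. -/
def MemIf {X Y : Type*} [TopologicalSpace X] [TopologicalSpace Y]
    (f : X → Y) (A : Set X) : Prop :=
  ∃ F : Set X, IsFsigma F ∧ A ⊆ F ∧ PiecewiseContinuous (F.restrict f)

/-- A^f = f⁻¹(Y \ cl(A)). -/
def Af {X Y : Type*} [TopologicalSpace Y] (f : X → Y) (A : Set Y) : Set X :=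
  f ⁻¹' (closure A)ᶜ

/-- The pair (x, X′) is f-irreducible outside A: for every open neighborhood V
of x, A^f ∩ X′ ∩ V ∉ I_f. -/
def IrredOutside {X Y : Type*} [TopologicalSpace X] [TopologicalSpace Y]
    (f : X → Y) (x : X) (X' : Set X) (A : Set Y) : Prop :=
  ∀ V : Set X, IsOpen V → x ∈ V → ¬ MemIf f (Af f A ∩ X' ∩ V)

section Helpers

variable {X Y : Type*} [TopologicalSpace X] [TopologicalSpace Y] {f : X → Y}

theorem memIf_mono {A B : Set X} (hAB : A ⊆ B) (h : MemIf f B) : MemIf f A := by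
  obtain ⟨F, h1, h2, h3⟩ := h
  exact ⟨F, h1, hAB.trans h2, h3⟩

theorem memIf_of_pieces (Q : ℕ → Set X) (hcl : ∀ n, IsClosed (Q n))
    (hco : ∀ n, ContinuousOn f (Q n)) {A : Set X} (hA : A ⊆ ⋃ n, Q n) :
    MemIf f A := by
  refine ⟨⋃ n, Q n, ⟨Q, hcl, rfl⟩, hA, fun n => Subtype.val ⁻¹' Q n, ?_, ?_, ?_⟩
  · exact fun n => (hcl n).preimage continuous_subtype_val
  · ext ⟨z, hz⟩
    simpa using hz
  · intro n
    exact (hco n).comp continuous_subtype_val.continuousOn (fun z hz => hz)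

theorem pieces_of_memIf {A : Set X} (h : MemIf f A) :
    ∃ Q : ℕ → Set X, (∀ n, IsClosed (Q n)) ∧ (∀ n, ContinuousOn f (Q n)) ∧
      A ⊆ ⋃ n, Q n := by
  obtain ⟨F, ⟨E, hEcl, hFE⟩, hAF, ⟨C, hCcl, hCuniv, hCco⟩⟩ := h
  have hEF : ∀ m, E m ⊆ F := fun m => hFE ▸ subset_iUnion E m
  choose H hHcl hHC using fun k => isClosed_induced_iff.mp (hCcl k)
  refine ⟨fun n => E n.unpair.1 ∩ H n.unpair.2,
    fun n => (hEcl _).inter (hHcl _), ?_, ?_⟩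
  · intro n
    rw [continuousOn_iff_continuous_restrict]
    set ι : ↥(E n.unpair.1 ∩ H n.unpair.2) → ↥F :=
      fun z => ⟨z.1, hEF _ z.2.1⟩ with hι
    have : (E n.unpair.1 ∩ H n.unpair.2).restrict f = (F.restrict f) ∘ ι := rfl
    change Continuous ((F.restrict f) ∘ ι)
    exact (hCco n.unpair.2).comp_continuous
      (continuous_subtype_val.subtype_mk _)
      (fun z => by
        show ι z ∈ C n.unpair.2
        rw [← hHC n.unpair.2]
        exact z.2.2)
  · intro z hz
    have hzF : z ∈ F := hAF hz
    have : (⟨z, hzF⟩ : ↥F) ∈ ⋃ k, C k := hCuniv ▸ mem_univ _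
    obtain ⟨k, hk⟩ := mem_iUnion.mp this
    have hzH : z ∈ H k := by
      rw [← hHC k] at hk
      exact hk
    obtain ⟨m, hm⟩ := mem_iUnion.mp (hFE ▸ hzF)
    exact mem_iUnion.mpr ⟨Nat.pair m k, by simp [Nat.unpair_pair, hm, hzH]⟩

theorem memIf_iUnion (G : ℕ → Set X) (h : ∀ n, MemIf f (G n)) :
    MemIf f (⋃ n, G n) := by
  choose Q hcl hco hsub using fun n => pieces_of_memIf (h n)
  refine memIf_of_pieces (fun n => Q n.unpair.1 n.unpair.2)
    (fun n => hcl _ _) (fun n => hco _ _) ?_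
  intro z hz
  obtain ⟨n, hn⟩ := mem_iUnion.mp hz
  obtain ⟨k, hk⟩ := mem_iUnion.mp (hsub n hn)
  exact mem_iUnion.mpr ⟨Nat.pair n k, by simp [Nat.unpair_pair, hk]⟩

theorem memIf_union {A B : Set X} (hA : MemIf f A) (hB : MemIf f B) :
    MemIf f (A ∪ B) := by
  have := memIf_iUnion (f := f) (fun n => if n = 0 then A else B)
    (fun n => by by_cases h : n = 0 <;> simp only [h, if_true, if_false] <;> [exact hA; exact hB])
  refine memIf_mono ?_ this
  intro z hz
  rcases hz with hz | hz
  · exact mem_iUnion.mpr ⟨0, by simp [hz]⟩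
  · exact mem_iUnion.mpr ⟨1, by simp [hz]⟩

theorem open_eq_iUnion_closed (hGdelta : ∀ s : Set X, IsClosed s → IsGδ s)
    {U : Set X} (hU : IsOpen U) :
    ∃ R : ℕ → Set X, (∀ n, IsClosed (R n)) ∧ ⋃ n, R n = U := by
  obtain ⟨T, hTo, hTc, hTeq⟩ := hGdelta Uᶜ hU.isClosed_compl
  rcases T.eq_empty_or_nonempty with rfl | hTne
  · refine ⟨fun _ => ∅, fun _ => isClosed_empty, ?_⟩
    have : U = ∅ := by
      have : Uᶜ = univ := by rw [hTeq]; simp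
      simpa [compl_univ] using congrArg compl this
    simp [this]
  · obtain ⟨g, hg⟩ := hTc.exists_eq_range hTne
    refine ⟨fun n => (g n)ᶜ, fun n => (hTo _ (by rw [hg]; exact ⟨n, rfl⟩)).isClosed_compl, ?_⟩
    rw [← compl_iInter]
    have : ⋂ n, g n = ⋂₀ T := by rw [hg, sInter_range]
    rw [this, ← hTeq, compl_compl]

end Helpers

section LemmaL

variable {X Y : Type*} [TopologicalSpace X] [TopologicalSpace Y] {f : X → Y}

/-- Local-to-global: the part of S covered by open sets V with S ∩ V ∈ I_f
is itself in I_f. -/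
theorem memIf_inter_maxOpen [ParacompactSpace X]
    (hGdelta : ∀ s : Set X, IsClosed s → IsGδ s) (S : Set X) :
    MemIf f (S ∩ ⋃₀ {V : Set X | IsOpen V ∧ MemIf f (S ∩ V)}) := by
  set 𝒱 : Set (Set X) := {V : Set X | IsOpen V ∧ MemIf f (S ∩ V)} with h𝒱
  have hMopen : IsOpen (⋃₀ 𝒱) := isOpen_sUnion (fun V hV => hV.1)
  obtain ⟨E, hEcl, hEU⟩ := open_eq_iUnion_closed hGdelta hMopen
  have key : ∀ m, MemIf f (S ∩ E m) := by
    intro m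
    -- the open cover
    set u : Option ↥𝒱 → Set X := fun i => i.elim (E m)ᶜ (fun V => ↑V) with hu
    have huo : ∀ i, IsOpen (u i) := by
      rintro (_ | V)
      · exact (hEcl m).isOpen_compl
      · exact V.2.1
    have hucov : ⋃ i, u i = univ := by
      rw [eq_univ_iff_forall]
      intro z
      by_cases hz : z ∈ E m
      · have : z ∈ ⋃₀ 𝒱 := hEU ▸ mem_iUnion.mpr ⟨m, hz⟩
        obtain ⟨V, hV, hzV⟩ := this
        exact mem_iUnion.mpr ⟨some ⟨V, hV⟩, hzV⟩
      · exact mem_iUnion.mpr ⟨none, hz⟩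
    obtain ⟨v, hvo, hvcov, hvlf, hvu⟩ := precise_refinement u huo hucov
    -- pieces for each member of the cover
    have hQ : ∀ i : Option ↥𝒱, ∃ Q : ℕ → Set X, (∀ k, IsClosed (Q k)) ∧
        (∀ k, ContinuousOn f (Q k)) ∧ (S ∩ E m) ∩ v i ⊆ ⋃ k, Q k := by
      rintro (_ | V)
      · refine ⟨fun _ => ∅, fun _ => isClosed_empty, fun _ => continuousOn_empty f, ?_⟩
        intro z hz
        exact absurd hz.1.2 (hvu none hz.2)
      · obtain ⟨Q, h1, h2, h3⟩ := pieces_of_memIf V.2.2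
        exact ⟨Q, h1, h2, fun z hz => h3 ⟨hz.1.1, hvu _ hz.2⟩⟩
    choose Q hQcl hQco hQcov using hQ
    choose R hRcl hRuniv using fun i => open_eq_iUnion_closed hGdelta (hvo i)
    set P : ℕ → Set X := fun n => ⋃ i, Q i n.unpair.1 ∩ R i n.unpair.2 with hP
    have hsubv : ∀ i k l, Q i k ∩ R i l ⊆ v i := by
      intro i k l
      exact inter_subset_right.trans ((hRuniv i) ▸ subset_iUnion (R i) l)
    have hPlf : ∀ k l, LocallyFinite (fun i => Q i k ∩ R i l) :=
      fun k l => hvlf.subset (fun i => hsubv i k l)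
    refine memIf_of_pieces P ?_ ?_ ?_
    · intro n
      exact (hPlf _ _).isClosed_iUnion (fun i => (hQcl i _).inter (hRcl i _))
    · intro n
      exact (hPlf _ _).continuousOn_iUnion (fun i => (hQcl i _).inter (hRcl i _))
        (fun i => (hQco i _).mono inter_subset_left)
    · intro z hz
      have : z ∈ ⋃ i, v i := hvcov ▸ mem_univ z
      obtain ⟨i, hi⟩ := mem_iUnion.mp this
      obtain ⟨k, hk⟩ := mem_iUnion.mp (hQcov i ⟨hz, hi⟩)
      obtain ⟨l, hl⟩ := mem_iUnion.mp ((hRuniv i).symm ▸ hi)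
      exact mem_iUnion.mpr ⟨Nat.pair k l, mem_iUnion.mpr ⟨i, by simp [Nat.unpair_pair, hk, hl]⟩⟩
  have : S ∩ ⋃₀ 𝒱 ⊆ ⋃ m, S ∩ E m := by
    intro z hz
    obtain ⟨m, hm⟩ := mem_iUnion.mp (hEU.symm ▸ hz.2)
    exact mem_iUnion.mpr ⟨m, hz.1, hm⟩
  exact memIf_mono this (memIf_iUnion _ key)

/-- Regularity helper. -/
theorem exists_open_closure_subset {y : Y} {O : Set Y} [RegularSpace Y]
    (hO : IsOpen O) (hy : y ∈ O) :
    ∃ U : Set Y, IsOpen U ∧ y ∈ U ∧ closure U ⊆ O := by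
  obtain ⟨t, htn, htc, hts⟩ := exists_mem_nhds_isClosed_subset (hO.mem_nhds hy)
  exact ⟨interior t, isOpen_interior, mem_interior_iff_mem_nhds.mpr htn,
    (closure_minimal interior_subset htc).trans hts⟩

end LemmaL


section Main

variable {X Y : Type*} [TopologicalSpace X] [TopologicalSpace Y]

theorem not_irredOutside {f : X → Y} {x : X} {X' : Set X} {U : Set Y}
    (h : ¬ IrredOutside f x X' U) :
    ∃ V : Set X, IsOpen V ∧ x ∈ V ∧ MemIf f (Af f U ∩ X' ∩ V) := by
  unfold IrredOutside at h
  push_neg at h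
  exact h

end Main

/-- Key dichotomy lemma: for a Σ⁰₂-measurable f on a perfectly paracompact
space to a regular space, with X′ ⊆ A^f and A open, X′ ∉ I_f iff there exist
x ∈ cl(X′) ∩ A^f and an open U ⊆ Y strongly disjoint from A with f(x) ∈ U such
that (x, X′) is f-irreducible outside U. -/
theorem statement8 {X Y : Type*} [TopologicalSpace X] [TopologicalSpace Y]
    [ParacompactSpace X] (hGdelta : ∀ s : Set X, IsClosed s → IsGδ s)
    [RegularSpace Y]
    (f : X → Y) (hf : Sigma02Measurable f)
    (X' : Set X) (A : Set Y) (hA : IsOpen A) (hsub : X' ⊆ Af f A) :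
    ¬ MemIf f X' ↔
      ∃ x ∈ closure X' ∩ Af f A, ∃ U : Set Y, IsOpen U ∧
        closure U ∩ closure A = ∅ ∧ f x ∈ U ∧ IrredOutside f x X' U := by
  constructor
  · -- hard direction
    intro hli
    by_contra hno
    push_neg at hno
    apply hli
    -- the maximal open set where X' is locally in the ideal
    set M : Set X := ⋃₀ {V : Set X | IsOpen V ∧ MemIf f (X' ∩ V)} with hM
    have hMopen : IsOpen M := isOpen_sUnion (fun V hV => hV.1)
    have hMmem : MemIf f (X' ∩ M) := memIf_inter_maxOpen hGdelta X'
    have hnotM : ∀ y : X, y ∉ M → ∀ W : Set X, IsOpen W → y ∈ W →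
        ¬ MemIf f (X' ∩ W) := by
      intro y hy W hWo hyW hmem
      exact hy ⟨W, ⟨hWo, hmem⟩, hyW⟩
    -- Fσ decomposition of A^f
    obtain ⟨D, hDcl, hDeq⟩ := hf (closure A)ᶜ isClosed_closure.isOpen_compl
    have hDsub : ∀ n, D n ⊆ Af f A := fun n => by
      rw [Af, hDeq]; exact subset_iUnion D n
    -- the closed sets on which f is continuous
    set K : ℕ → Set X := fun n => closure X' ∩ D n ∩ Mᶜ with hK
    have hKcl : ∀ n, IsClosed (K n) :=
      fun n => (isClosed_closure.inter (hDcl n)).inter hMopen.isClosed_compl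
    have hKcont : ∀ n, ContinuousOn f (K n) := by
      intro n x hx
      have hxA : x ∈ Af f A := hDsub n hx.1.2
      have hxA' : f x ∉ closure A := hxA
      rw [ContinuousWithinAt, tendsto_nhds]
      intro O hOopen hfxO
      -- shrink twice inside O ∩ (closure A)ᶜ
      obtain ⟨U₁, hU₁o, hfxU₁, hclU₁⟩ :=
        exists_open_closure_subset (hOopen.inter isClosed_closure.isOpen_compl)
          ⟨hfxO, hxA'⟩
      obtain ⟨U₂, hU₂o, hfxU₂, hclU₂⟩ := exists_open_closure_subset hU₁o hfxU₁
      have hclU₂O : closure U₂ ⊆ O := fun y hy =>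
        (hclU₁ (subset_closure (hclU₂ hy))).1
      have hU₂adm : closure U₂ ∩ closure A = ∅ := by
        rw [eq_empty_iff_forall_notMem]
        rintro y ⟨hy1, hy2⟩
        exact (hclU₁ (subset_closure (hclU₂ hy1))).2 hy2
      obtain ⟨V, hVo, hxV, hVmem⟩ :=
        not_irredOutside (hno x ⟨hx.1.1, hxA⟩ U₂ hU₂o hU₂adm hfxU₂)
      rw [mem_nhdsWithin]
      refine ⟨V, hVo, hxV, ?_⟩
      rintro y ⟨hyV, hyK⟩
      by_contra hfyO
      have hyA : y ∈ Af f A := hDsub n hyK.1.2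
      have hfy2 : f y ∉ closure U₂ := fun h => hfyO (hclU₂O h)
      have hfyc : f y ∈ (closure U₂ ∪ closure A)ᶜ := by
        rintro (h | h)
        exacts [hfy2 h, hyA h]
      obtain ⟨Uy, hUyo, hfyUy, hclUy⟩ :=
        exists_open_closure_subset
          ((isClosed_closure.union isClosed_closure).isOpen_compl) hfyc
      have hUyadm : closure Uy ∩ closure A = ∅ := by
        rw [eq_empty_iff_forall_notMem]
        rintro w ⟨hw1, hw2⟩
        exact (hclUy hw1) (Or.inr hw2)
      obtain ⟨Vy, hVyo, hyVy, hVymem⟩ :=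
        not_irredOutside (hno y ⟨hyK.1.1, hyA⟩ Uy hUyo hUyadm hfyUy)
      -- X' ∩ (V ∩ Vy) belongs to the ideal, contradicting y ∉ M
      have hcover : X' ∩ (V ∩ Vy) ⊆
          (Af f U₂ ∩ X' ∩ V) ∪ (Af f Uy ∩ X' ∩ Vy) := by
        rintro z ⟨hzX, hzV, hzVy⟩
        by_cases hz2 : f z ∈ closure U₂
        · refine Or.inr ⟨⟨?_, hzX⟩, hzVy⟩
          intro hzy
          exact (hclUy hzy) (Or.inl hz2)
        · exact Or.inl ⟨⟨hz2, hzX⟩, hzV⟩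
      have : MemIf f (X' ∩ (V ∩ Vy)) :=
        memIf_mono hcover (memIf_union hVmem hVymem)
      exact hnotM y hyK.2 (V ∩ Vy) (hVo.inter hVyo) ⟨hyV, hyVy⟩ this
    -- assemble
    have hKn : ∀ n, MemIf f (X' ∩ K n) := by
      intro n
      exact memIf_of_pieces (fun _ => K n) (fun _ => hKcl n) (fun _ => hKcont n)
        (fun z hz => mem_iUnion.mpr ⟨0, hz.2⟩)
    have hcov : X' ⊆ (X' ∩ M) ∪ ⋃ n, X' ∩ K n := by
      intro z hz
      by_cases hzM : z ∈ M
      · exact Or.inl ⟨hz, hzM⟩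
      · have : z ∈ ⋃ n, D n := by rw [← hDeq]; exact hsub hz
        obtain ⟨n, hn⟩ := mem_iUnion.mp this
        exact Or.inr (mem_iUnion.mpr ⟨n, hz, ⟨subset_closure hz, hn⟩, hzM⟩)
    exact memIf_mono hcov (memIf_union hMmem (memIf_iUnion _ hKn))
  · -- easy direction
    rintro ⟨x, hx, U, hUo, hUdisj, hfxU, hirred⟩ hmem
    exact hirred univ isOpen_univ (mem_univ x)
      (memIf_mono (fun z hz => hz.1.2) hmem)
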